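/- Let A be a bounded self-adjoint operator on a complex Hilbert space H with 0 ≤ A ≤ 2I. Then for all x, y ∈ H, |⟨x − Ax, y − Ay⟩| ≤ ‖x‖‖y‖ − √(⟨(2A − A²)x, x⟩·⟨(2A − A²)y, y⟩). -/

import Mathlib

open scoped InnerProductSpace

theorem contraction_lemma {H : Type*} [NormedAddCommGroup H]
    [InnerProductSpace ℂ H] [CompleteSpace H] (A : H →L[ℂ] H)
    (hA : A.IsPositive) (hA2 : ((2 : ℂ) • (1 : H →L[ℂ] H) - A).IsPositive)
    (x y : H) :
    ‖⟪x - A x, y - A y⟫_ℂ‖ ≤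
      ‖x‖ * ‖y‖ -
        Real.sqrt ((⟪((2 : ℂ) • A - A * A) x, x⟫_ℂ).re *
          (⟪((2 : ℂ) • A - A * A) y, y⟫_ℂ).re) := by
  -- Positivity of 2A - A²
  have hAnn : (0 : H →L[ℂ] H) ≤ A := (ContinuousLinearMap.nonneg_iff_isPositive A).mpr hA
  have hP : ((2 : ℂ) • A - A * A).IsPositive := by
    rw [← ContinuousLinearMap.nonneg_iff_isPositive]
    obtain ⟨S, hSsa, -, hSsq⟩ :=
      CFC.exists_sqrt_of_isSelfAdjoint_of_quasispectrumRestricts hA.isSelfAdjoint hA.spectrumRestricts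
    have hSS : S * S = A := hSsq
    have hstar : star S = S := hSsa
    have hB : (0 : H →L[ℂ] H) ≤ (2 : ℂ) • (1 : H →L[ℂ] H) - A :=
      (ContinuousLinearMap.nonneg_iff_isPositive _).mpr hA2
    have key : star S * ((2 : ℂ) • (1 : H →L[ℂ] H) - A) * S = (2 : ℂ) • A - A * A := by
      rw [hstar, ← hSsq]; noncomm_ring
    rw [← key]
    exact star_left_conjugate_nonneg hB S
  -- abbreviations
  set a := ‖x - A x‖ with ha
  set b := ‖y - A y‖ with hb
  set p := (⟪((2 : ℂ) • A - A * A) x, x⟫_ℂ).re with hp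
  set q := (⟪((2 : ℂ) • A - A * A) y, y⟫_ℂ).re with hq
  have hp0 : 0 ≤ p := hP.re_inner_nonneg_left x
  have hq0 : 0 ≤ q := hP.re_inner_nonneg_left y
  have hsym : A.IsSymmetric := (ContinuousLinearMap.isSelfAdjoint_iff_isSymmetric).mp hA.isSelfAdjoint
  -- p = ‖x‖² - a², for generic z
  have expand : ∀ z : H, (⟪((2 : ℂ) • A - A * A) z, z⟫_ℂ).re = ‖z‖ ^ 2 - ‖z - A z‖ ^ 2 := by
    intro z
    have h1 : ‖z - A z‖ ^ 2 = ‖z‖ ^ 2 - 2 * (⟪z, A z⟫_ℂ).re + ‖A z‖ ^ 2 :=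
      @norm_sub_sq ℂ _ _ _ _ z (A z)
    have h2 : ⟪A (A z), z⟫_ℂ = ⟪A z, A z⟫_ℂ := hsym (A z) z
    have h2' : (⟪A (A z), z⟫_ℂ).re = ‖A z‖ ^ 2 := by
      rw [h2]; exact inner_self_eq_norm_sq (𝕜 := ℂ) (A z)
    have h3 : (⟪A z, z⟫_ℂ).re = (⟪z, A z⟫_ℂ).re := by
      rw [← inner_conj_symm z (A z), Complex.conj_re]
    simp only [ContinuousLinearMap.sub_apply, ContinuousLinearMap.smul_apply,
      ContinuousLinearMap.mul_apply, inner_sub_left, inner_smul_left, Complex.sub_re,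
      Complex.mul_re, map_ofNat, Complex.re_ofNat, Complex.im_ofNat]
    rw [h2', h3, h1]
    ring
  have hpx : p = ‖x‖ ^ 2 - a ^ 2 := by rw [hp, expand x, ha]
  have hqy : q = ‖y‖ ^ 2 - b ^ 2 := by rw [hq, expand y, hb]
  -- Cauchy–Schwarz
  have hcs : ‖⟪x - A x, y - A y⟫_ℂ‖ ≤ a * b := norm_inner_le_norm _ _
  -- real arithmetic
  have ha0 : 0 ≤ a := norm_nonneg _
  have hb0 : 0 ≤ b := norm_nonneg _
  have hX : 0 ≤ ‖x‖ := norm_nonneg x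
  have hY : 0 ≤ ‖y‖ := norm_nonneg y
  have hs := Real.sqrt_nonneg p
  have ht := Real.sqrt_nonneg q
  have hs2 : Real.sqrt p ^ 2 = p := Real.sq_sqrt hp0
  have ht2 : Real.sqrt q ^ 2 = q := Real.sq_sqrt hq0
  have hmul : Real.sqrt (p * q) = Real.sqrt p * Real.sqrt q := Real.sqrt_mul hp0 q
  refine hcs.trans ?_
  rw [hmul]
  set s := Real.sqrt p
  set t := Real.sqrt q
  have key : (a * b + s * t) ^ 2 ≤ (‖x‖ * ‖y‖) ^ 2 := by
    have hX2 : ‖x‖ ^ 2 = a ^ 2 + s ^ 2 := by rw [hs2]; linarith [hpx]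
    have hY2 : ‖y‖ ^ 2 = b ^ 2 + t ^ 2 := by rw [ht2]; linarith [hqy]
    nlinarith [sq_nonneg (a * t - b * s), sq_nonneg (a * b - s * t)]
  have habst : 0 ≤ a * b + s * t := by positivity
  have : a * b + s * t ≤ ‖x‖ * ‖y‖ := by
    nlinarith [mul_nonneg hX hY]
  linarith
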